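/- There exist parameters (B_1, B_2, v_{11}, v_{12}, v_{21}, v_{22}) of the two-item all-pay auction, a Nash equilibrium (F_1, F_2) of that two-item auction, and an item j ∈ {1,2}, such that the pair of marginal distributions of F_1 and F_2 on the coordinate j is NOT a Nash equilibrium of the single-item all-pay auction with parameters (B_1, B_2, v_{1j}, v_{2j}). (Concretely this holds for B_1 = B_2 = 1, all four values equal to 3, with each player playing the uniform distribution on the segment {(t, 1 − t) : t ∈ [0, 1]}.) -/

import Mathlib

open MeasureTheory Set

noncomputable section

/-- `L_j = min {B₁, B₂, v_{1j}, v_{2j}}` for item `j` of the two-item auction. -/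
def Lval2 (B : Fin 2 → ℝ) (v : Fin 2 → Fin 2 → ℝ) (j : Fin 2) : ℝ :=
  min (min (B 0) (B 1)) (min (v 0 j) (v 1 j))

/-- Probability that player `i` wins item `j` when bidding `xi` on it while the
opponent bids `xo`: the strictly higher bid wins; on a tie at `L_j` the player with
the strictly larger `min {Bᵢ, v_{ij}}` wins, and all other ties are fair coins. -/
def winProb2 (B : Fin 2 → ℝ) (v : Fin 2 → Fin 2 → ℝ) (i j : Fin 2) (xi xo : ℝ) : ℝ :=
  if xo < xi then 1
  else if xi < xo then 0
  else if xi = Lval2 B v j ∧ min (B (1 - i)) (v (1 - i) j) < min (B i) (v i j) then 1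
  else if xi = Lval2 B v j ∧ min (B i) (v i j) < min (B (1 - i)) (v (1 - i) j) then 0
  else 1 / 2

/-- Expected total utility of player `i` from the pure bid vectors `p` (own) and
`q` (opponent): the sum over the two items of the item payoffs. -/
def payoff2 (B : Fin 2 → ℝ) (v : Fin 2 → Fin 2 → ℝ) (i : Fin 2) (p q : ℝ × ℝ) : ℝ :=
  (winProb2 B v i 0 p.1 q.1 * v i 0 - p.1) +
    (winProb2 B v i 1 p.2 q.2 * v i 1 - p.2)

/-- Feasible bid vectors of a player with budget `Bi`. -/
def Feas (Bi : ℝ) : Set (ℝ × ℝ) := {p | 0 ≤ p.1 ∧ 0 ≤ p.2 ∧ p.1 + p.2 ≤ Bi}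

/-- A mixed strategy with budget `Bi`: a probability measure on the feasible set. -/
def IsStrategy2 (Bi : ℝ) (μ : Measure (ℝ × ℝ)) : Prop :=
  IsProbabilityMeasure μ ∧ μ (Feas Bi) = 1

/-- Expected utility of player `i` when he plays `μ` and the opponent plays `ν`. -/
def expUtil2 (B : Fin 2 → ℝ) (v : Fin 2 → Fin 2 → ℝ) (i : Fin 2)
    (μ ν : Measure (ℝ × ℝ)) : ℝ :=
  ∫ p, (∫ q, payoff2 B v i p q ∂ν) ∂μ

/-- `(F 0, F 1)` is a (mixed) Nash equilibrium of the two-item all-pay auction. -/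
def IsNash2 (B : Fin 2 → ℝ) (v : Fin 2 → Fin 2 → ℝ) (F : Fin 2 → Measure (ℝ × ℝ)) :
    Prop :=
  (∀ i, IsStrategy2 (B i) (F i)) ∧
  ∀ i, ∀ μ, IsStrategy2 (B i) μ →
    expUtil2 B v i μ (F (1 - i)) ≤ expUtil2 B v i (F i) (F (1 - i))

/-- The uniform distribution on the segment from `a` to `b` in the plane: the
pushforward of the uniform distribution on `[0, 1]` under the affine
parameterization of the segment. -/
def unifSeg (a b : ℝ × ℝ) : Measure (ℝ × ℝ) :=
  Measure.map (fun t : ℝ => ((1 - t) * a.1 + t * b.1, (1 - t) * a.2 + t * b.2))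
    (volume.restrict (Icc (0 : ℝ) 1))

/-- `L = min {B₁, B₂, v₁, v₂}` for the single-item auction. -/
def Lval1 (B v : Fin 2 → ℝ) : ℝ := min (min (B 0) (B 1)) (min (v 0) (v 1))

/-- Single-item winning probability with the same tie-breaking rule. -/
def winProb1 (B v : Fin 2 → ℝ) (i : Fin 2) (xi xo : ℝ) : ℝ :=
  if xo < xi then 1
  else if xi < xo then 0
  else if xi = Lval1 B v ∧ min (B (1 - i)) (v (1 - i)) < min (B i) (v i) then 1
  else if xi = Lval1 B v ∧ min (B i) (v i) < min (B (1 - i)) (v (1 - i)) then 0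
  else 1 / 2

/-- Single-item payoff of player `i`. -/
def payoff1 (B v : Fin 2 → ℝ) (i : Fin 2) (xi xo : ℝ) : ℝ :=
  winProb1 B v i xi xo * v i - xi

/-- A single-item mixed strategy: a probability measure on `[0, Bi]`. -/
def IsStrategy1 (Bi : ℝ) (μ : Measure ℝ) : Prop :=
  IsProbabilityMeasure μ ∧ μ (Icc 0 Bi) = 1

/-- Single-item expected utility. -/
def expUtil1 (B v : Fin 2 → ℝ) (i : Fin 2) (μ ν : Measure ℝ) : ℝ :=
  ∫ xi, (∫ xo, payoff1 B v i xi xo ∂ν) ∂μ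

/-- Nash equilibrium of the single-item all-pay auction. -/
def IsNash1 (B v : Fin 2 → ℝ) (F : Fin 2 → Measure ℝ) : Prop :=
  (∀ i, IsStrategy1 (B i) (F i)) ∧
  ∀ i, ∀ μ, IsStrategy1 (B i) μ →
    expUtil1 B v i μ (F (1 - i)) ≤ expUtil1 B v i (F i) (F (1 - i))

namespace MargAux
def stdWin (xi xo : ℝ) : ℝ := if xo < xi then 1 else if xi < xo then 0 else 1/2

def m : Measure ℝ := volume.restrict (Icc 0 1)

def f (t : ℝ) : ℝ × ℝ := (t, 1 - t)

lemma hf : Measurable f := measurable_id.prodMk (measurable_const.sub measurable_id)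

def ν : Measure (ℝ × ℝ) := m.map f

instance : IsProbabilityMeasure m := ⟨by
  rw [m, Measure.restrict_apply_univ, Real.volume_Icc]; norm_num⟩

instance : IsProbabilityMeasure ν := Measure.isProbabilityMeasure_map hf.aemeasurable

lemma stdWin_meas (x : ℝ) : Measurable (stdWin x) := by
  unfold stdWin
  exact Measurable.ite measurableSet_Iio measurable_const
    (Measurable.ite measurableSet_Ioi measurable_const measurable_const)

lemma stdWin_nonneg (x t : ℝ) : 0 ≤ stdWin x t := by unfold stdWin; split_ifs <;> norm_num

lemma stdWin_le_one (x t : ℝ) : stdWin x t ≤ 1 := by unfold stdWin; split_ifs <;> norm_num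

lemma integrable_stdWin (x : ℝ) : Integrable (stdWin x) m :=
  (integrable_const 1).mono' (stdWin_meas x).aestronglyMeasurable
    (Filter.Eventually.of_forall fun t => by
      rw [Real.norm_eq_abs, abs_of_nonneg (stdWin_nonneg x t)]; exact stdWin_le_one x t)

lemma integrable_stdWin' (y : ℝ) : Integrable (fun t => stdWin y (1 - t)) m :=
  (integrable_const 1).mono'
    (((stdWin_meas y).comp (measurable_const.sub measurable_id)).aestronglyMeasurable)
    (Filter.Eventually.of_forall fun t => by
      rw [Real.norm_eq_abs, abs_of_nonneg (stdWin_nonneg _ _)]; exact stdWin_le_one _ _)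

lemma int_stdWin {x : ℝ} (hx : x ∈ Icc (0:ℝ) 1) : ∫ t, stdWin x t ∂m = x := by
  have h0 : m {x} = 0 := by
    rw [m, Measure.restrict_apply (measurableSet_singleton x)]
    exact measure_mono_null inter_subset_left Real.volume_singleton
  have hae : stdWin x =ᵐ[m] (Iio x).indicator (fun _ => (1:ℝ)) := by
    filter_upwards [measure_eq_zero_iff_ae_notMem.mp h0] with t ht
    have ht' : t ≠ x := ht
    unfold stdWin
    rcases lt_trichotomy t x with h | h | h
    · simp [h, indicator_of_mem (mem_Iio.2 h)]
    · exact absurd h ht'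
    · simp [indicator_of_notMem (by simp [mem_Iio]; linarith : t ∉ Iio x), h,
        not_lt.2 (le_of_lt h)]
  rw [integral_congr_ae hae, integral_indicator measurableSet_Iio, setIntegral_const]
  have hm : m (Iio x) = ENNReal.ofReal x := by
    rw [m, Measure.restrict_apply measurableSet_Iio]
    have : Iio x ∩ Icc 0 1 = Ico 0 x := by
      ext t
      simp only [mem_inter_iff, mem_Iio, mem_Icc, mem_Ico]
      constructor
      · rintro ⟨h1, h2, h3⟩; exact ⟨h2, h1⟩
      · rintro ⟨h1, h2⟩; exact ⟨h2, h1, by linarith [hx.2]⟩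
    rw [this, Real.volume_Ico, sub_zero]
  rw [Measure.real_def, hm, ENNReal.toReal_ofReal hx.1, smul_eq_mul, mul_one]

lemma int_stdWin' {y : ℝ} (hy : y ∈ Icc (0:ℝ) 1) : ∫ t, stdWin y (1 - t) ∂m = y := by
  have h0 : m {1 - y} = 0 := by
    rw [m, Measure.restrict_apply (measurableSet_singleton _)]
    exact measure_mono_null inter_subset_left Real.volume_singleton
  have hae : (fun t => stdWin y (1 - t)) =ᵐ[m] (Ioi (1 - y)).indicator (fun _ => (1:ℝ)) := by
    filter_upwards [measure_eq_zero_iff_ae_notMem.mp h0] with t ht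
    have ht' : t ≠ 1 - y := ht
    unfold stdWin
    rcases lt_trichotomy t (1 - y) with h | h | h
    · simp [indicator_of_notMem (by simp [mem_Ioi]; linarith : t ∉ Ioi (1 - y)),
        not_lt.2 (by linarith : y ≤ 1 - t), (by linarith : y < 1 - t)]
    · exact absurd h ht'
    · simp [indicator_of_mem (mem_Ioi.2 h), (by linarith : 1 - t < y)]
  rw [integral_congr_ae hae, integral_indicator measurableSet_Ioi, setIntegral_const]
  have hm : m (Ioi (1 - y)) = ENNReal.ofReal y := by
    rw [m, Measure.restrict_apply measurableSet_Ioi]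
    have : Ioi (1 - y) ∩ Icc 0 1 = Ioc (1 - y) 1 := by
      ext t
      simp only [mem_inter_iff, mem_Ioi, mem_Icc, mem_Ioc]
      constructor
      · rintro ⟨h1, h2, h3⟩; exact ⟨h1, h3⟩
      · rintro ⟨h1, h2⟩; exact ⟨h1, by linarith [hy.2], h2⟩
    rw [this, Real.volume_Ioc]
    congr 1; ring
  rw [Measure.real_def, hm, ENNReal.toReal_ofReal hy.1, smul_eq_mul, mul_one]


lemma Feas_meas : MeasurableSet (Feas 1) := by
  have : Feas 1 = {p : ℝ × ℝ | 0 ≤ p.1} ∩ ({p : ℝ × ℝ | 0 ≤ p.2} ∩ {p : ℝ × ℝ | p.1 + p.2 ≤ 1}) := rfl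
  rw [this]
  exact (measurableSet_le measurable_const measurable_fst).inter
    ((measurableSet_le measurable_const measurable_snd).inter
      (measurableSet_le (measurable_fst.add measurable_snd) measurable_const))

lemma winProb2_eq (i j : Fin 2) (xi xo : ℝ) :
    winProb2 (fun _ => (1:ℝ)) (fun _ _ => (3:ℝ)) i j xi xo = stdWin xi xo := by
  simp [winProb2, stdWin]

lemma payoff2_eq (i : Fin 2) (p q : ℝ × ℝ) :
    payoff2 (fun _ => (1:ℝ)) (fun _ _ => (3:ℝ)) i p q
      = (stdWin p.1 q.1 * 3 - p.1) + (stdWin p.2 q.2 * 3 - p.2) := by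
  simp [payoff2, winProb2_eq]

lemma G_eq (i : Fin 2) {p : ℝ × ℝ} (hp : p ∈ Feas 1) :
    ∫ q, payoff2 (fun _ => (1:ℝ)) (fun _ _ => (3:ℝ)) i p q ∂ν = 2 * (p.1 + p.2) := by
  obtain ⟨h1, h2, h3⟩ := hp
  have hx : p.1 ∈ Icc (0:ℝ) 1 := ⟨h1, by linarith⟩
  have hy : p.2 ∈ Icc (0:ℝ) 1 := ⟨h2, by linarith⟩
  have hmeas : Measurable fun q : ℝ × ℝ =>
      (stdWin p.1 q.1 * 3 - p.1) + (stdWin p.2 q.2 * 3 - p.2) :=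
    ((((stdWin_meas p.1).comp measurable_fst).mul_const 3).sub measurable_const).add
      ((((stdWin_meas p.2).comp measurable_snd).mul_const 3).sub measurable_const)
  simp_rw [payoff2_eq]
  rw [ν, integral_map hf.aemeasurable hmeas.aestronglyMeasurable]
  simp only [f]
  have hA : Integrable (fun t => stdWin p.1 t * 3 - p.1) m :=
    ((integrable_stdWin p.1).mul_const 3).sub (integrable_const _)
  have hC : Integrable (fun t => stdWin p.2 (1 - t) * 3 - p.2) m :=
    ((integrable_stdWin' p.2).mul_const 3).sub (integrable_const _)
  rw [integral_add hA hC,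
    integral_sub ((integrable_stdWin p.1).mul_const 3) (integrable_const _),
    integral_sub ((integrable_stdWin' p.2).mul_const 3) (integrable_const _),
    integral_mul_const, integral_mul_const, int_stdWin hx, int_stdWin' hy,
    integral_const]
  simp [measure_univ]; ring

lemma expUtil_self (i : Fin 2) :
    expUtil2 (fun _ => (1:ℝ)) (fun _ _ => (3:ℝ)) i ν ν = 2 := by
  have hS : MeasurableSet {p : ℝ × ℝ | p ∈ Feas 1 ∧ p.1 + p.2 = 1} := by
    have : {p : ℝ × ℝ | p ∈ Feas 1 ∧ p.1 + p.2 = 1}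
        = Feas 1 ∩ ((fun p : ℝ × ℝ => p.1 + p.2) ⁻¹' {1}) := rfl
    rw [this]
    exact Feas_meas.inter ((measurable_fst.add measurable_snd) (measurableSet_singleton 1))
  have hae : ∀ᵐ p ∂ν, p ∈ Feas 1 ∧ p.1 + p.2 = 1 := by
    rw [ν, ae_map_iff hf.aemeasurable hS]
    filter_upwards [ae_restrict_mem measurableSet_Icc] with t ht
    refine ⟨⟨ht.1, by simp only [f]; linarith [ht.2], by simp only [f]; linarith⟩, ?_⟩
    simp only [f]; ring
  have hcongr : (fun p => ∫ q, payoff2 (fun _ => (1:ℝ)) (fun _ _ => (3:ℝ)) i p q ∂ν)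
      =ᵐ[ν] fun _ => (2:ℝ) :=
    hae.mono fun p hp => by dsimp only; rw [G_eq i hp.1, hp.2]; norm_num
  unfold expUtil2
  rw [integral_congr_ae hcongr, integral_const]
  simp [measure_univ]

lemma expUtil_le (i : Fin 2) (μ : Measure (ℝ × ℝ)) (hμ : IsStrategy2 1 μ) :
    expUtil2 (fun _ => (1:ℝ)) (fun _ _ => (3:ℝ)) i μ ν ≤ 2 := by
  haveI := hμ.1
  have hae : ∀ᵐ p ∂μ, p ∈ Feas 1 := by
    rw [ae_iff]
    have h : {p : ℝ × ℝ | ¬ p ∈ Feas 1} = (Feas 1)ᶜ := rfl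
    rw [h, measure_compl Feas_meas (measure_ne_top _ _), hμ.2, measure_univ, tsub_self]
  unfold expUtil2
  by_cases hG : Integrable
      (fun p => ∫ q, payoff2 (fun _ => (1:ℝ)) (fun _ _ => (3:ℝ)) i p q ∂ν) μ
  · have hle : (fun p => ∫ q, payoff2 (fun _ => (1:ℝ)) (fun _ _ => (3:ℝ)) i p q ∂ν)
        ≤ᵐ[μ] fun _ => (2:ℝ) :=
      hae.mono fun p hp => by dsimp only; rw [G_eq i hp]; linarith [hp.2.2]
    calc ∫ p, ∫ q, payoff2 (fun _ => (1:ℝ)) (fun _ _ => (3:ℝ)) i p q ∂ν ∂μ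
        ≤ ∫ _, (2:ℝ) ∂μ := integral_mono_ae hG (integrable_const _) hle
      _ = 2 := by simp [measure_univ]
  · rw [integral_undef hG]; norm_num

lemma nu_strategy : IsStrategy2 ((fun _ => (1:ℝ)) 0) ν := by
  refine ⟨inferInstance, ?_⟩
  rw [ν, Measure.map_apply hf Feas_meas, m, Measure.restrict_apply (hf Feas_meas)]
  have h : f ⁻¹' Feas 1 ∩ Icc 0 1 = Icc 0 1 := by
    apply inter_eq_right.mpr
    intro t ht
    refine mem_preimage.mpr ⟨ht.1, ?_, ?_⟩
    · show (0:ℝ) ≤ 1 - t; linarith [ht.2]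
    · show t + (1 - t) ≤ 1; linarith
  rw [h, Real.volume_Icc]; norm_num
lemma winProb1_eq (i : Fin 2) (xi xo : ℝ) :
    winProb1 (fun _ => (1:ℝ)) (fun _ => (3:ℝ)) i xi xo = stdWin xi xo := by
  simp [winProb1, stdWin]

lemma inner1 {xi : ℝ} (hxi : xi ∈ Icc (0:ℝ) 1) :
    ∫ xo, payoff1 (fun _ => (1:ℝ)) (fun _ => (3:ℝ)) 0 xi xo ∂m = 2 * xi := by
  have hpay : ∀ xo, payoff1 (fun _ => (1:ℝ)) (fun _ => (3:ℝ)) 0 xi xo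
      = stdWin xi xo * 3 - xi := fun xo => by simp [payoff1, winProb1_eq]
  simp_rw [hpay]
  rw [integral_sub ((integrable_stdWin xi).mul_const 3) (integrable_const _),
    integral_mul_const, int_stdWin hxi, integral_const]
  simp [measure_univ]; ring

lemma exp_dirac :
    expUtil1 (fun _ => (1:ℝ)) (fun _ => (3:ℝ)) 0 (Measure.dirac 1) m = 2 := by
  unfold expUtil1
  rw [integral_dirac, inner1 ⟨zero_le_one, le_refl 1⟩]; norm_num

lemma exp_unif : expUtil1 (fun _ => (1:ℝ)) (fun _ => (3:ℝ)) 0 m m = 1 := by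
  have h1 : ∫ xi in Icc (0:ℝ) 1,
        (∫ xo, payoff1 (fun _ => (1:ℝ)) (fun _ => (3:ℝ)) 0 xi xo ∂m) ∂volume
      = ∫ xi in Icc (0:ℝ) 1, 2 * xi ∂volume :=
    setIntegral_congr_fun measurableSet_Icc (fun xi hxi => inner1 hxi)
  have h2 : ∫ xi in Icc (0:ℝ) 1, 2 * xi ∂volume = 1 := by
    rw [integral_Icc_eq_integral_Ioc, ← intervalIntegral.integral_of_le zero_le_one,
      intervalIntegral.integral_const_mul, integral_id]
    norm_num
  unfold expUtil1
  exact h1.trans h2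

lemma hmap' :
    Measure.map (fun p : ℝ × ℝ => if (0 : Fin 2) = 0 then p.1 else p.2) ν = m := by
  have h : (fun p : ℝ × ℝ => if (0 : Fin 2) = 0 then p.1 else p.2) = Prod.fst := by
    funext p; simp
  rw [h, ν, Measure.map_map measurable_fst hf]
  have h2 : (Prod.fst ∘ f) = id := rfl
  rw [h2, Measure.map_id]

end MargAux


/-- There are parameters of the two-item all-pay auction, a Nash equilibrium of the
two-item auction, and an item `j`, such that the pair of marginal distributions on
coordinate `j` is not a Nash equilibrium of the induced single-item auction on
item `j`. -/
theorem marginals_not_nash :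
    ∃ (B : Fin 2 → ℝ) (v : Fin 2 → Fin 2 → ℝ) (F : Fin 2 → Measure (ℝ × ℝ))
      (j : Fin 2),
      (∀ i, 0 ≤ B i) ∧ (∀ i j', 0 < v i j') ∧
      IsNash2 B v F ∧
      ¬ IsNash1 B (fun i => v i j)
        (fun i => Measure.map (fun p : ℝ × ℝ => if j = 0 then p.1 else p.2) (F i)) := by
  refine ⟨fun _ => 1, fun _ _ => 3, fun _ => MargAux.ν, 0, fun i => zero_le_one,
    fun i j => by norm_num, ⟨fun i => MargAux.nu_strategy, fun i μ hμ => ?_⟩, ?_⟩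
  · rw [MargAux.expUtil_self]
    exact MargAux.expUtil_le i μ hμ
  · have hG : (fun i : Fin 2 => Measure.map
        (fun p : ℝ × ℝ => if (0 : Fin 2) = 0 then p.1 else p.2)
        ((fun _ : Fin 2 => MargAux.ν) i)) = fun _ : Fin 2 => MargAux.m :=
      funext fun _ => MargAux.hmap'
    rw [hG]
    show ¬ IsNash1 (fun _ => (1:ℝ)) (fun _ => (3:ℝ)) (fun _ => MargAux.m)
    intro hN
    obtain ⟨-, hbest⟩ := hN
    have hδ : IsStrategy1 (1 : ℝ) (Measure.dirac 1) := by
      refine ⟨inferInstance, ?_⟩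
      exact Measure.dirac_apply_of_mem ⟨zero_le_one, le_refl 1⟩
    have h := hbest 0 (Measure.dirac 1) hδ
    simp only at h
    rw [MargAux.exp_dirac, MargAux.exp_unif] at h
    linarith
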